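/- Let x, y be nonnegative real numbers, let a, b, μ, ν be positive real numbers, let p ≥ 2 and let q satisfy 1/p + 1/q = 1. Set S = μ^{1/(p-1)}·a^q + ν^{1/(p-1)}·b^q. Then x^p/μ + y^p/ν ≥ (a·x + b·y)^p / S^{p-1} + μ^{1/(p-1)}·a^q·| (1/(a·μ))^{1/(p-1)}·x − (a·x + b·y)/S |^p + ν^{1/(p-1)}·b^q·| (1/(ν·b))^{1/(p-1)}·y − (a·x + b·y)/S |^p. -/

import Mathlib

lemma superadd_rpow {x y r : ℝ} (hx : 0 ≤ x) (hy : 0 ≤ y) (hr : 1 ≤ r) :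
    x ^ r + y ^ r ≤ (x + y) ^ r := by
  have h := NNReal.add_rpow_le_rpow_add (x.toNNReal) (y.toNNReal) hr
  have := NNReal.coe_le_coe.2 h
  push_cast [NNReal.coe_rpow, Real.coe_toNNReal x hx, Real.coe_toNNReal y hy] at this
  simpa using this

lemma superquad_rpow {p : ℝ} (hp : 2 ≤ p) {s t : ℝ} (hs : 0 ≤ s) (ht : 0 ≤ t) :
    t ^ p + p * t ^ (p - 1) * (s - t) + |s - t| ^ p ≤ s ^ p := by
  have hp0 : (0:ℝ) < p := by linarith
  have hp1 : 1 ≤ p - 1 := by linarith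
  have contp : Continuous fun z : ℝ => z ^ p :=
    continuous_iff_continuousAt.2 fun z => Real.continuousAt_rpow_const z p (Or.inr hp0.le)
  rcases le_total t s with h | h
  · rw [abs_of_nonneg (sub_nonneg.2 h)]
    rcases eq_or_lt_of_le h with rfl | hlt
    · simp [Real.zero_rpow hp0.ne']
    set F : ℝ → ℝ := fun z => z ^ p - p * t ^ (p - 1) * z - (z - t) ^ p with hF
    have hder : ∀ z ∈ Set.Ioo t s,
        HasDerivAt F (p * z ^ (p - 1) - p * t ^ (p - 1) - p * (z - t) ^ (p - 1)) z := by
      intro z hz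
      have h1 : HasDerivAt (fun z : ℝ => z ^ p) (p * z ^ (p - 1)) z :=
        Real.hasDerivAt_rpow_const (Or.inr (by linarith : 1 ≤ p))
      have h2 : HasDerivAt (fun z : ℝ => (z - t) ^ p) (p * (z - t) ^ (p - 1)) z := by
        have := (Real.hasDerivAt_rpow_const (x := z - t) (p := p)
          (Or.inr (by linarith : 1 ≤ p))).comp z ((hasDerivAt_id z).sub_const t)
        simpa [Function.comp_def] using this
      have h3 : HasDerivAt (fun z : ℝ => p * t ^ (p - 1) * z) (p * t ^ (p - 1)) z := by
        simpa using (hasDerivAt_id z).const_mul (p * t ^ (p - 1))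
      exact (h1.sub h3).sub h2
    have mono : MonotoneOn F (Set.Icc t s) := by
      apply monotoneOn_of_deriv_nonneg (convex_Icc t s)
      · exact ((contp.sub (continuous_const.mul continuous_id)).sub
          (contp.comp (continuous_id.sub continuous_const))).continuousOn
      · intro z hz
        rw [interior_Icc] at hz
        exact (hder z hz).differentiableAt.differentiableWithinAt
      · intro z hz
        rw [interior_Icc] at hz
        rw [(hder z hz).deriv]
        have hsum : t ^ (p - 1) + (z - t) ^ (p - 1) ≤ z ^ (p - 1) := by
          have := superadd_rpow ht (sub_nonneg.2 hz.1.le) hp1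
          simpa using this
        nlinarith
    have hFts := mono (Set.left_mem_Icc.2 h) (Set.right_mem_Icc.2 h) h
    simp only [hF] at hFts
    rw [sub_self, Real.zero_rpow hp0.ne'] at hFts
    linarith
  · rw [abs_of_nonpos (sub_nonpos.2 h), neg_sub]
    rcases eq_or_lt_of_le h with rfl | hlt
    · simp [Real.zero_rpow hp0.ne']
    set F : ℝ → ℝ := fun z => z ^ p - p * t ^ (p - 1) * z - (t - z) ^ p with hF
    have hder : ∀ z ∈ Set.Ioo s t,
        HasDerivAt F (p * z ^ (p - 1) - p * t ^ (p - 1) + p * (t - z) ^ (p - 1)) z := by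
      intro z hz
      have h1 : HasDerivAt (fun z : ℝ => z ^ p) (p * z ^ (p - 1)) z :=
        Real.hasDerivAt_rpow_const (Or.inr (by linarith : 1 ≤ p))
      have h2 : HasDerivAt (fun z : ℝ => (t - z) ^ p) (-(p * (t - z) ^ (p - 1))) z := by
        have := (Real.hasDerivAt_rpow_const (x := t - z) (p := p)
          (Or.inr (by linarith : 1 ≤ p))).comp z ((hasDerivAt_id z).const_sub t)
        simpa [Function.comp_def] using this
      have h3 : HasDerivAt (fun z : ℝ => p * t ^ (p - 1) * z) (p * t ^ (p - 1)) z := by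
        simpa using (hasDerivAt_id z).const_mul (p * t ^ (p - 1))
      have := (h1.sub h3).sub h2
      rw [sub_neg_eq_add] at this
      exact this
    have anti : AntitoneOn F (Set.Icc s t) := by
      apply antitoneOn_of_deriv_nonpos (convex_Icc s t)
      · exact ((contp.sub (continuous_const.mul continuous_id)).sub
          (contp.comp (continuous_const.sub continuous_id))).continuousOn
      · intro z hz
        rw [interior_Icc] at hz
        exact (hder z hz).differentiableAt.differentiableWithinAt
      · intro z hz
        rw [interior_Icc] at hz
        rw [(hder z hz).deriv]
        have hz0 : 0 ≤ z := le_trans hs hz.1.le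
        have hsum : z ^ (p - 1) + (t - z) ^ (p - 1) ≤ t ^ (p - 1) := by
          have := superadd_rpow hz0 (sub_nonneg.2 hz.2.le) hp1
          simpa using this
        nlinarith
    have hFts := anti (Set.left_mem_Icc.2 h) (Set.right_mem_Icc.2 h) h
    simp only [hF] at hFts
    rw [sub_self, Real.zero_rpow hp0.ne'] at hFts
    linarith

theorem euler_lagrange_superquadratic_two_terms (x y : ℝ) (hx : 0 ≤ x) (hy : 0 ≤ y)
    (a b μ ν : ℝ) (ha : 0 < a) (hb : 0 < b) (hμ : 0 < μ) (hν : 0 < ν)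
    (p q : ℝ) (hp : 2 ≤ p) (hpq : 1 / p + 1 / q = 1)
    (S : ℝ) (hS : S = μ ^ (1 / (p - 1)) * a ^ q + ν ^ (1 / (p - 1)) * b ^ q) :
    x ^ p / μ + y ^ p / ν ≥ (a * x + b * y) ^ p / S ^ (p - 1) +
      μ ^ (1 / (p - 1)) * a ^ q * |(1 / (a * μ)) ^ (1 / (p - 1)) * x - (a * x + b * y) / S| ^ p +
      ν ^ (1 / (p - 1)) * b ^ q * |(1 / (ν * b)) ^ (1 / (p - 1)) * y - (a * x + b * y) / S| ^ p := by
  have hp0 : (0:ℝ) < p := by linarith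
  have hpm : (0:ℝ) < p - 1 := by linarith
  have hq : q = p / (p - 1) := by
    have h1 : 1 / q = 1 - 1 / p := by linarith
    have hq0 : q ≠ 0 := by
      intro h
      rw [h] at h1
      simp at h1
      have : p = 1 := by
        field_simp at h1
        linarith
      linarith
    rw [← one_div_one_div q, h1]
    field_simp
  set r : ℝ := 1 / (p - 1) with hr
  have hr0 : 0 < r := by positivity
  have hqr : q = r + 1 := by rw [hq, hr]; field_simp; ring
  set c1 : ℝ := μ ^ r * a ^ q with hc1
  set c2 : ℝ := ν ^ r * b ^ q with hc2
  have hc1pos : 0 < c1 := by positivity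
  have hc2pos : 0 < c2 := by positivity
  have hSpos : 0 < S := by rw [hS]; positivity
  set u : ℝ := (1 / (a * μ)) ^ r * x with hu
  set v : ℝ := (1 / (ν * b)) ^ r * y with hv
  set m : ℝ := (a * x + b * y) / S with hm
  have hu0 : 0 ≤ u := by positivity
  have hv0 : 0 ≤ v := by positivity
  have hm0 : 0 ≤ m := by positivity
  -- identity: c1 * u = a * x
  have hc1u : c1 * u = a * x := by
    rw [hc1, hu, one_div, Real.inv_rpow (by positivity), Real.mul_rpow ha.le hμ.le, hqr,
      Real.rpow_add ha, Real.rpow_one]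
    field_simp
  have hc2v : c2 * v = b * y := by
    rw [hc2, hv, one_div, Real.inv_rpow (by positivity), Real.mul_rpow hν.le hb.le, hqr,
      Real.rpow_add hb, Real.rpow_one]
    field_simp
  -- identity: c1 * u ^ p = x ^ p / μ
  have hrpq : r * p = q := by rw [hq, hr]; field_simp
  have hc1up : c1 * u ^ p = x ^ p / μ := by
    rw [hc1, hu, Real.mul_rpow (by positivity) hx, ← Real.rpow_mul (by positivity), hrpq,
      one_div, Real.inv_rpow (by positivity), Real.mul_rpow ha.le hμ.le, hqr,
      Real.rpow_add hμ, Real.rpow_one]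
    field_simp
  have hc2vp : c2 * v ^ p = y ^ p / ν := by
    rw [hc2, hv, Real.mul_rpow (by positivity) hy, ← Real.rpow_mul (by positivity), hrpq,
      one_div, Real.inv_rpow (by positivity), Real.mul_rpow hν.le hb.le, hqr,
      Real.rpow_add hν, Real.rpow_one]
    field_simp
  have hSm : S * m ^ p = (a * x + b * y) ^ p / S ^ (p - 1) := by
    rw [hm, Real.div_rpow (by positivity) hSpos.le]
    rw [show (p : ℝ) = (p - 1) + 1 by ring, Real.rpow_add hSpos, Real.rpow_one]
    field_simp
    ring
  -- superquadratic inequality at the two points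
  have h1 := superquad_rpow hp hu0 hm0
  have h2 := superquad_rpow hp hv0 hm0
  have H1 := mul_le_mul_of_nonneg_left h1 hc1pos.le
  have H2 := mul_le_mul_of_nonneg_left h2 hc2pos.le
  have hSmean : S * m = a * x + b * y := by
    rw [hm]; field_simp
  have hlin : c1 * (p * m ^ (p - 1) * (u - m)) + c2 * (p * m ^ (p - 1) * (v - m)) = 0 := by
    have hz : c1 * (u - m) + c2 * (v - m) = 0 := by
      have hsm : (c1 + c2) * m = a * x + b * y := by rw [← hS]; exact hSmean
      linarith [hc1u, hc2v, hsm]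
    calc c1 * (p * m ^ (p - 1) * (u - m)) + c2 * (p * m ^ (p - 1) * (v - m))
        = p * m ^ (p - 1) * (c1 * (u - m) + c2 * (v - m)) := by ring
      _ = 0 := by rw [hz]; ring
  have hmain : (a * x + b * y) ^ p / S ^ (p - 1) + c1 * |u - m| ^ p + c2 * |v - m| ^ p
      ≤ x ^ p / μ + y ^ p / ν := by
    have hS' : (a * x + b * y) ^ p / S ^ (p - 1) = c1 * m ^ p + c2 * m ^ p := by
      rw [← hSm, hS]; ring
    rw [hS', ← hc1up, ← hc2vp]
    linarith [H1, H2, hlin]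
  calc x ^ p / μ + y ^ p / ν
      ≥ (a * x + b * y) ^ p / S ^ (p - 1) + c1 * |u - m| ^ p + c2 * |v - m| ^ p := hmain
    _ = (a * x + b * y) ^ p / S ^ (p - 1) +
        μ ^ r * a ^ q * |(1 / (a * μ)) ^ r * x - (a * x + b * y) / S| ^ p +
        ν ^ r * b ^ q * |(1 / (ν * b)) ^ r * y - (a * x + b * y) / S| ^ p := by
      rw [hc1, hc2, hu, hv, hm]
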